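/- CPOP recursion: for every integer t ≥ 1 and every φ ∈ ℝ, f^t(φ) = inf over integers 0 ≤ s < t and over φ' ∈ ℝ of { f^s(φ') + C(s, t, φ', φ) + h(t−s) + β }; that is, the minimum penalized cost of fitting a continuous piecewise-linear function to the first t data points with fitted value φ at time t is obtained by optimizing over the last changepoint location s and its fitted value φ'. -/
import Mathlib


/-- The continuous piecewise-linear segment cost
`C(s, t, φ', φ) = (1/σ²) ∑_{i=s+1}^{t} (y_i − φ' − ((φ − φ')/(t − s))·(i − s))²`. -/
noncomputable def segCost (σ : ℝ) (y : ℕ → ℝ) (s t : ℕ) (φ' φ : ℝ) : ℝ :=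
  (1 / σ ^ 2) * ∑ i ∈ Finset.Icc (s + 1) t,
    (y i - φ' - ((φ - φ') / ((t : ℝ) - (s : ℝ))) * ((i : ℝ) - (s : ℝ))) ^ 2

/-- `cpopF σ y h β t φ` is the minimum penalized cost of fitting a continuous
piecewise-linear function to the first `t` data points with fitted value `φ` at
time `t`: the infimum over `k ≥ 0` changepoints `0 = τ₀ < τ₁ < ⋯ < τ_k < t` with
fitted values `Φ 0, …, Φ k` of the total segment costs, segment-length penalties
`h`, and changepoint penalty `β(k+1)`; with `cpopF σ y h β 0 φ = 0`. -/
noncomputable def cpopF (σ : ℝ) (y : ℕ → ℝ) (h : ℕ → ℝ) (β : ℝ) (t : ℕ) (φ : ℝ) : ℝ :=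
  if t = 0 then 0
  else sInf {v : ℝ | ∃ (k : ℕ) (τ : ℕ → ℕ) (Φ : ℕ → ℝ),
    τ 0 = 0 ∧ (∀ i < k, τ i < τ (i + 1)) ∧ τ k < t ∧
    v = (∑ i ∈ Finset.range k,
          (segCost σ y (τ i) (τ (i + 1)) (Φ i) (Φ (i + 1)) + h (τ (i + 1) - τ i)))
        + segCost σ y (τ k) t (Φ k) φ + h (t - τ k) + β * ((k : ℝ) + 1)}

/-- The candidate set whose infimum defines `cpopF` for `t ≠ 0`. -/
def cpopSet (σ : ℝ) (y : ℕ → ℝ) (h : ℕ → ℝ) (β : ℝ) (t : ℕ) (φ : ℝ) : Set ℝ :=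
  {v : ℝ | ∃ (k : ℕ) (τ : ℕ → ℕ) (Φ : ℕ → ℝ),
    τ 0 = 0 ∧ (∀ i < k, τ i < τ (i + 1)) ∧ τ k < t ∧
    v = (∑ i ∈ Finset.range k,
          (segCost σ y (τ i) (τ (i + 1)) (Φ i) (Φ (i + 1)) + h (τ (i + 1) - τ i)))
        + segCost σ y (τ k) t (Φ k) φ + h (t - τ k) + β * ((k : ℝ) + 1)}

lemma cpopF_of_ne (σ : ℝ) (y : ℕ → ℝ) (h : ℕ → ℝ) (β : ℝ) {t : ℕ} (ht : t ≠ 0) (φ : ℝ) :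
    cpopF σ y h β t φ = sInf (cpopSet σ y h β t φ) := by
  rw [cpopF, if_neg ht]; rfl

lemma segCost_nonneg (σ : ℝ) (y : ℕ → ℝ) (s t : ℕ) (φ' φ : ℝ) :
    0 ≤ segCost σ y s t φ' φ := by
  unfold segCost
  positivity

lemma tau_le_of_le {τ : ℕ → ℕ} {k : ℕ} (hτ : ∀ i < k, τ i < τ (i + 1)) :
    ∀ i j, i ≤ j → j ≤ k → τ i ≤ τ j := by
  intro i j hij hjk
  induction j with
  | zero => simp [Nat.le_zero.mp hij]
  | succ n ih =>
    rcases Nat.lt_or_ge i (n + 1) with hlt | hge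
    · exact le_trans (ih (Nat.lt_succ_iff.mp hlt) (le_trans (Nat.le_succ n) hjk))
        (le_of_lt (hτ n (Nat.lt_of_succ_le hjk)))
    · have : i = n + 1 := le_antisymm hij hge
      simp [this]

lemma le_tau {τ : ℕ → ℕ} {k : ℕ} (h0 : τ 0 = 0) (hτ : ∀ i < k, τ i < τ (i + 1)) :
    ∀ i ≤ k, i ≤ τ i := by
  intro i hik
  induction i with
  | zero => simp
  | succ n ih =>
    have h1 : n ≤ τ n := ih (le_trans (Nat.le_succ n) hik)
    have h2 := hτ n (Nat.lt_of_succ_le hik)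
    omega

lemma cpopSet_nonempty (σ : ℝ) (y : ℕ → ℝ) (h : ℕ → ℝ) (β : ℝ) {t : ℕ} (ht : 1 ≤ t)
    (φ : ℝ) : (cpopSet σ y h β t φ).Nonempty := by
  refine ⟨_, 0, (fun _ => 0), (fun _ => φ), rfl, ?_, ht, rfl⟩
  intro i hi; exact absurd hi (Nat.not_lt_zero i)

lemma cpopSet_lower (σ : ℝ) (y : ℕ → ℝ) (h : ℕ → ℝ) (β : ℝ) {t u : ℕ}
    (hu : 1 ≤ u) (hut : u ≤ t) (φ : ℝ) :
    ∀ v ∈ cpopSet σ y h β u φ,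
      (t : ℝ) * (min (sInf (h '' Set.Icc 1 t)) 0 - |β|) ≤ v := by
  set Hlow : ℝ := min (sInf (h '' Set.Icc 1 t)) 0 with hHlow
  have hfin : (h '' Set.Icc 1 t).Finite := (Set.finite_Icc _ _).image _
  have hHle : ∀ m : ℕ, 1 ≤ m → m ≤ t → Hlow ≤ h m := by
    intro m hm1 hm2
    exact le_trans (min_le_left _ _) (csInf_le hfin.bddBelow ⟨m, ⟨hm1, hm2⟩, rfl⟩)
  have hH0 : Hlow ≤ 0 := min_le_right _ _
  rintro v ⟨k, τ, Φ, h0, hinc, hlt, rfl⟩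
  have hkτ : k ≤ τ k := le_tau h0 hinc k le_rfl
  have hk1 : k + 1 ≤ u := by omega
  -- bound the sum
  have hsum : (k : ℝ) * Hlow ≤ ∑ i ∈ Finset.range k,
      (segCost σ y (τ i) (τ (i + 1)) (Φ i) (Φ (i + 1)) + h (τ (i + 1) - τ i)) := by
    have hterm : ∀ i ∈ Finset.range k, Hlow ≤
        segCost σ y (τ i) (τ (i + 1)) (Φ i) (Φ (i + 1)) + h (τ (i + 1) - τ i) := by
      intro i hi
      rw [Finset.mem_range] at hi
      have hm1 : 1 ≤ τ (i + 1) - τ i := by have := hinc i hi; omega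
      have hτi1 : τ (i + 1) ≤ τ k := tau_le_of_le hinc (i + 1) k (by omega) le_rfl
      have hm2 : τ (i + 1) - τ i ≤ t := by omega
      have ha := hHle _ hm1 hm2
      have hb := segCost_nonneg σ y (τ i) (τ (i + 1)) (Φ i) (Φ (i + 1))
      linarith
    have := Finset.card_nsmul_le_sum (Finset.range k)
      (fun i => segCost σ y (τ i) (τ (i + 1)) (Φ i) (Φ (i + 1)) + h (τ (i + 1) - τ i))
      Hlow hterm
    simpa [nsmul_eq_mul] using this
  have hseg := segCost_nonneg σ y (τ k) u (Φ k) φ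
  have hlast : Hlow ≤ h (u - τ k) := hHle _ (by omega) (by omega)
  have hβ : -|β| * ((k : ℝ) + 1) ≤ β * ((k : ℝ) + 1) := by
    apply mul_le_mul_of_nonneg_right (neg_abs_le β)
    positivity
  have hcmp : (t : ℝ) * (Hlow - |β|) ≤ ((k : ℝ) + 1) * (Hlow - |β|) := by
    apply mul_le_mul_of_nonpos_right _ (by linarith [abs_nonneg β])
    have hku : (k : ℝ) + 1 ≤ (u : ℝ) := by exact_mod_cast hk1
    have hut' : (u : ℝ) ≤ (t : ℝ) := by exact_mod_cast hut
    linarith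
  nlinarith [abs_nonneg β]

lemma cpopSet_bddBelow (σ : ℝ) (y : ℕ → ℝ) (h : ℕ → ℝ) (β : ℝ) {u : ℕ}
    (hu : 1 ≤ u) (φ : ℝ) : BddBelow (cpopSet σ y h β u φ) :=
  ⟨(u : ℝ) * (min (sInf (h '' Set.Icc 1 u)) 0 - |β|),
    fun v hv => cpopSet_lower σ y h β hu le_rfl φ v hv⟩

lemma concat_mem (σ : ℝ) (y : ℕ → ℝ) (h : ℕ → ℝ) (β : ℝ) {s t : ℕ} (hst : s < t)
    (φ' φ : ℝ) :
    ∀ a ∈ cpopSet σ y h β s φ',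
      a + segCost σ y s t φ' φ + h (t - s) + β ∈ cpopSet σ y h β t φ := by
  rintro a ⟨k, τ, Φ, h0, hinc, hlt, rfl⟩
  refine ⟨k + 1, (fun i => if i ≤ k then τ i else s), (fun i => if i ≤ k then Φ i else φ'),
    by simp [h0], ?_, ?_, ?_⟩
  · intro i hi
    by_cases hik : i < k
    · simp only [if_pos (le_of_lt hik), if_pos (Nat.succ_le_of_lt hik)]
      exact hinc i hik
    · have heq : i = k := by omega
      rw [heq]
      simp only [le_refl, if_pos, if_neg (by omega : ¬ k + 1 ≤ k)]
      exact hlt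
  · simpa [if_neg (by omega : ¬ k + 1 ≤ k)] using hst
  · rw [Finset.sum_range_succ]
    have hcong : ∀ i ∈ Finset.range k,
        (segCost σ y (if i ≤ k then τ i else s)
            (if i + 1 ≤ k then τ (i + 1) else s)
            (if i ≤ k then Φ i else φ')
            (if i + 1 ≤ k then Φ (i + 1) else φ')
          + h ((if i + 1 ≤ k then τ (i + 1) else s) - (if i ≤ k then τ i else s)))
        = (segCost σ y (τ i) (τ (i + 1)) (Φ i) (Φ (i + 1)) + h (τ (i + 1) - τ i)) := by
      intro i hi
      rw [Finset.mem_range] at hi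
      simp only [if_pos (le_of_lt hi), if_pos (Nat.succ_le_of_lt hi)]
    rw [Finset.sum_congr rfl hcong]
    simp only [le_refl, if_pos, if_neg (by omega : ¬ k + 1 ≤ k)]
    push_cast
    ring

/-- CPOP recursion: for every `t ≥ 1` and every `φ ∈ ℝ`,
`f^t(φ) = inf_{0 ≤ s < t, φ' ∈ ℝ} { f^s(φ') + C(s, t, φ', φ) + h (t−s) + β }`. -/
theorem cpop_recursion (σ : ℝ) (hσ : 0 < σ) (y : ℕ → ℝ) (h : ℕ → ℝ) (β : ℝ)
    (t : ℕ) (ht : 1 ≤ t) (φ : ℝ) :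
    cpopF σ y h β t φ =
      sInf {v : ℝ | ∃ (s : ℕ) (φ' : ℝ), s < t ∧
        v = cpopF σ y h β s φ' + segCost σ y s t φ' φ + h (t - s) + β} := by
  have ht0 : t ≠ 0 := by omega
  rw [cpopF_of_ne σ y h β ht0 φ]
  set Hlow : ℝ := min (sInf (h '' Set.Icc 1 t)) 0 with hHlow
  have hfin : (h '' Set.Icc 1 t).Finite := (Set.finite_Icc _ _).image _
  have hHle : ∀ m : ℕ, 1 ≤ m → m ≤ t → Hlow ≤ h m := by
    intro m hm1 hm2
    exact le_trans (min_le_left _ _) (csInf_le hfin.bddBelow ⟨m, ⟨hm1, hm2⟩, rfl⟩)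
  have hH0 : Hlow ≤ 0 := min_le_right _ _
  set B : Set ℝ := {v : ℝ | ∃ (s : ℕ) (φ' : ℝ), s < t ∧
        v = cpopF σ y h β s φ' + segCost σ y s t φ' φ + h (t - s) + β} with hB
  have hBne : B.Nonempty := ⟨_, 0, φ, by omega, rfl⟩
  have hBbdd : BddBelow B := by
    refine ⟨(t : ℝ) * (Hlow - |β|) + (Hlow - |β|), ?_⟩
    rintro b ⟨s, φ', hst, rfl⟩
    have h1 : (t : ℝ) * (Hlow - |β|) ≤ cpopF σ y h β s φ' := by
      by_cases hs : s = 0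
      · subst hs
        rw [cpopF, if_pos rfl]
        have htR : (1 : ℝ) ≤ (t : ℝ) := by exact_mod_cast ht
        nlinarith [abs_nonneg β]
      · rw [cpopF_of_ne σ y h β hs φ']
        exact le_csInf (cpopSet_nonempty σ y h β (by omega) φ')
          (cpopSet_lower σ y h β (by omega) (le_of_lt hst) φ')
    have h2 := segCost_nonneg σ y s t φ' φ
    have h3 : Hlow ≤ h (t - s) := hHle _ (by omega) (by omega)
    have h4 : -|β| ≤ β := neg_abs_le β
    linarith
  apply le_antisymm
  · -- sInf (cpopSet t) ≤ sInf B
    apply le_csInf hBne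
    rintro b ⟨s, φ', hst, rfl⟩
    by_cases hs : s = 0
    · subst hs
      rw [cpopF, if_pos rfl]
      have hmem : (0 : ℝ) + segCost σ y 0 t φ' φ + h (t - 0) + β * ((0 : ℝ) + 1)
          ∈ cpopSet σ y h β t φ :=
        ⟨0, (fun _ => 0), (fun _ => φ'), rfl,
          (fun i hi => absurd hi (Nat.not_lt_zero i)), ht, by simp⟩
      have h1 := csInf_le (cpopSet_bddBelow σ y h β ht φ) hmem
      calc sInf (cpopSet σ y h β t φ)
          ≤ (0 : ℝ) + segCost σ y 0 t φ' φ + h (t - 0) + β * ((0 : ℝ) + 1) := h1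
        _ = 0 + segCost σ y 0 t φ' φ + h (t - 0) + β := by ring
    · have hs1 : 1 ≤ s := by omega
      rw [cpopF_of_ne σ y h β hs φ']
      have key : ∀ a ∈ cpopSet σ y h β s φ',
          sInf (cpopSet σ y h β t φ) - (segCost σ y s t φ' φ + h (t - s) + β) ≤ a := by
        intro a ha
        have := csInf_le (cpopSet_bddBelow σ y h β ht φ)
          (concat_mem σ y h β hst φ' φ a ha)
        linarith
      have := le_csInf (cpopSet_nonempty σ y h β hs1 φ') key
      linarith
  · -- sInf B ≤ sInf (cpopSet t)
    apply le_csInf (cpopSet_nonempty σ y h β ht φ)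
    rintro a ⟨k, τ, Φ, h0, hinc, hlt, rfl⟩
    rcases Nat.eq_zero_or_pos k with hk | hk
    · subst hk
      have hmem : cpopF σ y h β 0 (Φ 0) + segCost σ y 0 t (Φ 0) φ + h (t - 0) + β ∈ B :=
        ⟨0, Φ 0, ht, rfl⟩
      have h1 := csInf_le hBbdd hmem
      have h2 : cpopF σ y h β 0 (Φ 0) = 0 := by rw [cpopF, if_pos rfl]
      rw [h2] at h1
      rw [h0]
      simp only [Nat.sub_zero, Finset.sum_range_zero] at h1 ⊢
      norm_num at h1 ⊢
      linarith
    · obtain ⟨k', rfl⟩ : ∃ k', k = k' + 1 := ⟨k - 1, by omega⟩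
      set s := τ (k' + 1) with hsdef
      have hks : k' + 1 ≤ s := le_tau h0 hinc (k' + 1) le_rfl
      have hs0 : s ≠ 0 := by omega
      have hmemB : cpopF σ y h β s (Φ (k' + 1)) + segCost σ y s t (Φ (k' + 1)) φ
          + h (t - s) + β ∈ B := ⟨s, Φ (k' + 1), hlt, rfl⟩
      have h1 := csInf_le hBbdd hmemB
      have hmemS : (∑ i ∈ Finset.range k',
            (segCost σ y (τ i) (τ (i + 1)) (Φ i) (Φ (i + 1)) + h (τ (i + 1) - τ i)))
          + segCost σ y (τ k') s (Φ k') (Φ (k' + 1)) + h (s - τ k')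
          + β * ((k' : ℝ) + 1) ∈ cpopSet σ y h β s (Φ (k' + 1)) :=
        ⟨k', τ, Φ, h0, fun i hi => hinc i (by omega), hinc k' (by omega), rfl⟩
      have h2 : cpopF σ y h β s (Φ (k' + 1)) ≤ (∑ i ∈ Finset.range k',
            (segCost σ y (τ i) (τ (i + 1)) (Φ i) (Φ (i + 1)) + h (τ (i + 1) - τ i)))
          + segCost σ y (τ k') s (Φ k') (Φ (k' + 1)) + h (s - τ k')
          + β * ((k' : ℝ) + 1) := by
        rw [cpopF_of_ne σ y h β hs0 (Φ (k' + 1))]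
        exact csInf_le (cpopSet_bddBelow σ y h β (by omega) (Φ (k' + 1))) hmemS
      rw [Finset.sum_range_succ]
      push_cast
      push_cast at h1 h2
      linarith
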